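/- (Importance-reweighted statistics are unbiased.) In the setting of the discrete importance-sampling estimator — ν a probability density on ℝ^d, μ ≥ 0 integrable with Z := ∫ μ > 0, forward transition densities p_k with ∫ p_k(x,y) dy = 1, backward transition densities q_k with ∫ q_k(y,x) dx = 1, forward path density p(x_{0:K}) = ν(x_0)·∏_{k=0}^{K-1} p_k(x_k, x_{k+1}), weight Ẑ(x_{0:K}) = μ(x_K)·∏_{k=0}^{K-1} q_k(x_{k+1}, x_k)/p(x_{0:K}), and the support condition that μ(x_K)·∏ q_k(x_{k+1}, x_k) vanishes a.e. where p vanishes — the following holds for every bounded measurable g : ℝ^d → ℝ: ∫ g(x_K)·Ẑ(x_{0:K})·p(x_{0:K}) dx_{0:K} = ∫ g(x)·μ(x) dx. Consequently the self-normalized estimator satisfies (∫ g(x_K)·Ẑ·p dx_{0:K}) / (∫ Ẑ·p dx_{0:K}) = ∫ g d(μ/Z), the expectation of g under the normalized target. -/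

import Mathlib

open MeasureTheory Finset

section Aux

variable {d : ℕ}
local notation "E" => EuclideanSpace ℝ (Fin d)

lemma L1 : ∀ (K : ℕ) (Q : ℕ → E → E → ENNReal),
    (∀ k, Measurable (Function.uncurry (Q k))) →
    (∀ k < K, ∀ y, ∫⁻ x, Q k y x = 1) →
    ∀ (h : E → ENNReal), Measurable h →
    ∫⁻ x : Fin (K+1) → E, h (x (Fin.last K)) * ∏ k : Fin K, Q k (x k.succ) (x k.castSucc)
      = ∫⁻ y, h y := by
  intro K
  induction K with
  | zero =>
    intro Q hQm hQ1 h hm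
    simp only [Finset.univ_eq_empty, Finset.prod_empty, mul_one]
    have := (volume_preserving_funUnique (Fin 1) E).lintegral_comp hm
    simp at this ⊢
    convert this
  | succ K ih =>
    intro Q hQm hQ1 h hm
    have hpair : ∀ (k : ℕ) (i j : Fin (K+2)), Measurable (fun x : Fin (K+2) → E => Q k (x i) (x j)) := by
      intro k i j
      have m : Measurable (fun x : Fin (K+2) → E => (x i, x j)) :=
        (measurable_pi_apply i).prodMk (measurable_pi_apply j)
      exact (hQm k).comp m
    set e := MeasurableEquiv.piFinSuccAbove (fun _ : Fin (K+2) => E) 0 with he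
    set c : (Fin (K+1) → E) → ENNReal := fun t =>
      h (t (Fin.last K)) * ∏ k : Fin K, Q (k+1) (t k.succ) (t k.castSucc) with hc
    set G : E × (Fin (K+1) → E) → ENNReal := fun ap => Q 0 (ap.2 0) ap.1 * c ap.2 with hG
    have hcm : Measurable c := by
      apply Measurable.mul
      · exact hm.comp (measurable_pi_apply _)
      · refine Finset.measurable_prod _ fun k _ => ?_
        have m : Measurable (fun t : Fin (K+1) → E => (t k.succ, t k.castSucc)) :=
          (measurable_pi_apply _).prodMk (measurable_pi_apply _)
        exact (hQm _).comp m
    have hGm : Measurable G := by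
      apply Measurable.mul
      · have m : Measurable (fun ap : E × (Fin (K+1) → E) => (ap.2 0, ap.1)) :=
          ((measurable_pi_apply 0).comp measurable_snd).prodMk measurable_fst
        exact (hQm 0).comp m
      · exact hcm.comp measurable_snd
    have key : ∀ x : Fin (K+2) → E,
        h (x (Fin.last (K+1))) * ∏ k : Fin (K+1), Q k (x k.succ) (x k.castSucc) = G (e x) := by
      intro x
      have e2 : ∀ j : Fin (K+1), (e x).2 j = x j.succ := by
        intro j
        simp only [he, MeasurableEquiv.piFinSuccAbove, MeasurableEquiv.coe_mk,
          Equiv.coe_fn_mk]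
        rfl
      have e1 : (e x).1 = x 0 := by
        simp [he, MeasurableEquiv.piFinSuccAbove]
      simp only [hG, hc, e1, e2, Fin.prod_univ_succ, Fin.val_succ, Fin.succ_last,
        ← Fin.succ_castSucc, Fin.val_zero, Fin.castSucc_zero]
      ring
    calc ∫⁻ x : Fin (K+2) → E, h (x (Fin.last (K+1))) * ∏ k : Fin (K+1), Q k (x k.succ) (x k.castSucc)
        = ∫⁻ x : Fin (K+2) → E, G (e x) := by simp_rw [key]
      _ = ∫⁻ ap, G ap ∂((volume : Measure E).prod (Measure.pi fun _ : Fin (K+1) => volume)) :=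
          (volume_preserving_piFinSuccAbove (fun _ : Fin (K+2) => E) 0).lintegral_comp hGm
      _ = ∫⁻ t, ∫⁻ a, G (a, t) ∂(volume : Measure E) ∂(Measure.pi fun _ : Fin (K+1) => volume) :=
          lintegral_prod_symm G hGm.aemeasurable
      _ = ∫⁻ t, c t ∂(Measure.pi fun _ : Fin (K+1) => volume) := by
          apply lintegral_congr
          intro t
          simp only [hG]
          have m : Measurable (fun a : E => Q 0 (t 0) a) := by
            have m2 : Measurable (fun a : E => ((t 0 : E), a)) :=
              measurable_const.prodMk measurable_id
            exact (hQm 0).comp m2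
          rw [lintegral_mul_const (c t) m, hQ1 0 (Nat.succ_pos K) (t 0), one_mul]
      _ = ∫⁻ y, h y := by
          rw [← volume_pi]
          exact ih (fun k => Q (k+1)) (fun k => hQm (k+1))
            (fun k hk y => hQ1 (k+1) (Nat.succ_lt_succ hk) y) h hm

lemma L2 {K : ℕ} (q : ℕ → E → E → ℝ)
    (hqm : ∀ k, Measurable (Function.uncurry (q k)))
    (hq0 : ∀ k y x, 0 ≤ q k y x)
    (hq1 : ∀ k < K, ∀ y, ∫ x, q k y x = 1)
    (f : E → ℝ) (hfm : Measurable f) (hfi : Integrable f) (hf0 : ∀ y, 0 ≤ f y) :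
    Integrable (fun x : Fin (K+1) → E =>
      f (x (Fin.last K)) * ∏ k : Fin K, q k (x k.succ) (x k.castSucc)) ∧
    ∫ x : Fin (K+1) → E, f (x (Fin.last K)) * ∏ k : Fin K, q k (x k.succ) (x k.castSucc)
      = ∫ y, f y := by
  set F : (Fin (K+1) → E) → ℝ := fun x =>
    f (x (Fin.last K)) * ∏ k : Fin K, q k (x k.succ) (x k.castSucc) with hF
  have hQm : ∀ k, Measurable (Function.uncurry (fun y x => ENNReal.ofReal (q k y x))) := by
    intro k
    exact ENNReal.measurable_ofReal.comp (hqm k)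
  have hQ1 : ∀ k < K, ∀ y, ∫⁻ x, ENNReal.ofReal (q k y x) = 1 := by
    intro k hk y
    have hi : Integrable (q k y) := by
      by_contra hni
      exact one_ne_zero ((hq1 k hk y).symm.trans (integral_undef hni))
    rw [← ofReal_integral_eq_lintegral_ofReal hi (Filter.Eventually.of_forall (hq0 k y)),
      hq1 k hk y, ENNReal.ofReal_one]
  have hFm : Measurable F := by
    apply Measurable.mul
    · exact hfm.comp (measurable_pi_apply _)
    · refine Finset.measurable_prod _ fun k _ => ?_
      have m : Measurable (fun x : Fin (K+1) → E => (x k.succ, x k.castSucc)) :=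
        (measurable_pi_apply _).prodMk (measurable_pi_apply _)
      exact (hqm _).comp m
  have hF0 : ∀ x, 0 ≤ F x := fun x =>
    mul_nonneg (hf0 _) (Finset.prod_nonneg fun k _ => hq0 _ _ _)
  have key : ∫⁻ x : Fin (K+1) → E, ENNReal.ofReal (F x) = ENNReal.ofReal (∫ y, f y) := by
    have eq1 : ∀ x : Fin (K+1) → E, ENNReal.ofReal (F x)
        = ENNReal.ofReal (f (x (Fin.last K)))
          * ∏ k : Fin K, ENNReal.ofReal (q k (x k.succ) (x k.castSucc)) := by
      intro x
      rw [hF, ENNReal.ofReal_mul (hf0 _), ENNReal.ofReal_prod_of_nonneg]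
      intro k _
      exact hq0 _ _ _
    simp_rw [eq1]
    rw [L1 K (fun k y x => ENNReal.ofReal (q k y x)) hQm hQ1
      (fun y => ENNReal.ofReal (f y)) (ENNReal.measurable_ofReal.comp hfm)]
    exact (ofReal_integral_eq_lintegral_ofReal hfi
      (Filter.Eventually.of_forall hf0)).symm
  have hFi : Integrable F := by
    refine ⟨hFm.aestronglyMeasurable, ?_⟩
    rw [hasFiniteIntegral_iff_ofReal (Filter.Eventually.of_forall hF0), key]
    exact ENNReal.ofReal_lt_top
  refine ⟨hFi, ?_⟩
  rw [integral_eq_lintegral_of_nonneg_ae (Filter.Eventually.of_forall hF0)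
    hFm.aestronglyMeasurable, key, ENNReal.toReal_ofReal (integral_nonneg hf0)]

lemma L3 {K : ℕ} (q : ℕ → E → E → ℝ)
    (hqm : ∀ k, Measurable (Function.uncurry (q k)))
    (hq0 : ∀ k y x, 0 ≤ q k y x)
    (hq1 : ∀ k < K, ∀ y, ∫ x, q k y x = 1)
    (f : E → ℝ) (hfm : Measurable f) (hfi : Integrable f) :
    Integrable (fun x : Fin (K+1) → E =>
      f (x (Fin.last K)) * ∏ k : Fin K, q k (x k.succ) (x k.castSucc)) ∧
    ∫ x : Fin (K+1) → E, f (x (Fin.last K)) * ∏ k : Fin K, q k (x k.succ) (x k.castSucc)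
      = ∫ y, f y := by
  set fp : E → ℝ := fun y => max (f y) 0 with hfp
  set fm : E → ℝ := fun y => max (-f y) 0 with hfm'
  have hfpm : Measurable fp := hfm.max measurable_const
  have hfmm : Measurable fm := hfm.neg.max measurable_const
  have hfpi : Integrable fp := hfi.pos_part
  have hfmi : Integrable fm := hfi.neg.pos_part
  have hp := L2 q hqm hq0 hq1 fp hfpm hfpi (fun y => le_max_right _ _)
  have hm := L2 q hqm hq0 hq1 fm hfmm hfmi (fun y => le_max_right _ _)
  have hsub : ∀ y, f y = fp y - fm y := by
    intro y; simp [hfp, hfm', max_zero_sub_max_neg_zero_eq_self]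
  have hFsub : ∀ x : Fin (K+1) → E,
      f (x (Fin.last K)) * ∏ k : Fin K, q k (x k.succ) (x k.castSucc)
        = fp (x (Fin.last K)) * ∏ k : Fin K, q k (x k.succ) (x k.castSucc)
          - fm (x (Fin.last K)) * ∏ k : Fin K, q k (x k.succ) (x k.castSucc) := by
    intro x; rw [hsub (x (Fin.last K)), sub_mul]
  constructor
  · have h2 := hp.1.sub hm.1
    have : ((fun x => fp (x (Fin.last K)) * ∏ k : Fin K, q k (x k.succ) (x k.castSucc))
        - fun x => fm (x (Fin.last K)) * ∏ k : Fin K, q k (x k.succ) (x k.castSucc))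
        = fun x : Fin (K+1) → E =>
          f (x (Fin.last K)) * ∏ k : Fin K, q k (x k.succ) (x k.castSucc) := by
      funext x; simp [hFsub x]
    rwa [this] at h2
  · simp_rw [hFsub]
    rw [integral_sub hp.1 hm.1, hp.2, hm.2]
    have : ∫ y, f y = ∫ y, fp y - fm y := by
      apply integral_congr_ae
      exact Filter.Eventually.of_forall hsub
    rw [this, integral_sub hfpi hfmi]

end Aux

/-- Forward path density `p(x_{0:K}) = ν(x₀)·∏ p_k(x_k, x_{k+1})`. -/
noncomputable def pPath {d K : ℕ} (ν : EuclideanSpace ℝ (Fin d) → ℝ)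
    (p : ℕ → EuclideanSpace ℝ (Fin d) → EuclideanSpace ℝ (Fin d) → ℝ)
    (x : Fin (K + 1) → EuclideanSpace ℝ (Fin d)) : ℝ :=
  ν (x 0) * ∏ k : Fin K, p k (x k.castSucc) (x k.succ)

/-- Importance weight `Ẑ(x_{0:K}) = μ(x_K)·∏ q_k(x_{k+1}, x_k) / p(x_{0:K})`
(set to `0` where `p` vanishes). -/
noncomputable def zHat {d K : ℕ} (ν μ : EuclideanSpace ℝ (Fin d) → ℝ)
    (p q : ℕ → EuclideanSpace ℝ (Fin d) → EuclideanSpace ℝ (Fin d) → ℝ)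
    (x : Fin (K + 1) → EuclideanSpace ℝ (Fin d)) : ℝ :=
  if pPath ν p x = 0 then 0
  else (μ (x (Fin.last K)) * ∏ k : Fin K, q k (x k.succ) (x k.castSucc)) / pPath ν p x

/-- Importance-reweighted statistics are unbiased:
`∫ g(x_K)·Ẑ·p dx_{0:K} = ∫ g·μ`, and the self-normalized estimator equals the
expectation of `g` under the normalized target `μ/Z`. -/
theorem stmt4 {d K : ℕ}
    (ν μ : EuclideanSpace ℝ (Fin d) → ℝ)
    (hνm : Measurable ν) (hν0 : ∀ x, 0 ≤ ν x) (hν1 : ∫ x, ν x = 1)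
    (hμm : Measurable μ) (hμ0 : ∀ x, 0 ≤ μ x) (hμi : Integrable μ)
    (hZ : 0 < ∫ y, μ y)
    (p q : ℕ → EuclideanSpace ℝ (Fin d) → EuclideanSpace ℝ (Fin d) → ℝ)
    (hpm : ∀ k, Measurable (Function.uncurry (p k)))
    (hqm : ∀ k, Measurable (Function.uncurry (q k)))
    (hp0 : ∀ k x y, 0 ≤ p k x y) (hq0 : ∀ k y x, 0 ≤ q k y x)
    (hp1 : ∀ k < K, ∀ x, ∫ y, p k x y = 1)
    (hq1 : ∀ k < K, ∀ y, ∫ x, q k y x = 1)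
    (hsupp : ∀ᵐ x ∂(volume : Measure (Fin (K + 1) → EuclideanSpace ℝ (Fin d))),
      pPath ν p x = 0 →
        μ (x (Fin.last K)) * ∏ k : Fin K, q k (x k.succ) (x k.castSucc) = 0)
    (g : EuclideanSpace ℝ (Fin d) → ℝ) (hgm : Measurable g) (C : ℝ) (hgb : ∀ x, |g x| ≤ C) :
    (∫ x : Fin (K + 1) → EuclideanSpace ℝ (Fin d),
        g (x (Fin.last K)) * zHat ν μ p q x * pPath ν p x) = ∫ y, g y * μ y ∧
    (∫ x : Fin (K + 1) → EuclideanSpace ℝ (Fin d),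
        g (x (Fin.last K)) * zHat ν μ p q x * pPath ν p x) /
      (∫ x : Fin (K + 1) → EuclideanSpace ℝ (Fin d), zHat ν μ p q x * pPath ν p x)
      = ∫ y, g y * (μ y / ∫ z, μ z) := by
  have hW := L3 q hqm hq0 hq1 μ hμm hμi
  have hgμi : Integrable (fun y => g y * μ y) :=
    hμi.bdd_mul hgm.aestronglyMeasurable (Filter.Eventually.of_forall fun y => by simpa using hgb y)
  have hG := L3 q hqm hq0 hq1 (fun y => g y * μ y) (hgm.mul hμm) hgμi
  have h1 : (fun x : Fin (K+1) → EuclideanSpace ℝ (Fin d) =>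
        g (x (Fin.last K)) * zHat ν μ p q x * pPath ν p x)
      =ᵐ[volume] fun x => (g (x (Fin.last K)) * μ (x (Fin.last K)))
        * ∏ k : Fin K, q k (x k.succ) (x k.castSucc) := by
    filter_upwards [hsupp] with x hx
    by_cases hp : pPath ν p x = 0
    · simp [zHat, hp, mul_assoc, hx hp]
    · rw [zHat, if_neg hp, mul_assoc, div_mul_cancel₀ _ hp, ← mul_assoc]
  have h2 : (fun x : Fin (K+1) → EuclideanSpace ℝ (Fin d) => zHat ν μ p q x * pPath ν p x)
      =ᵐ[volume] fun x => μ (x (Fin.last K))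
        * ∏ k : Fin K, q k (x k.succ) (x k.castSucc) := by
    filter_upwards [hsupp] with x hx
    by_cases hp : pPath ν p x = 0
    · simp [zHat, hp, hx hp]
    · rw [zHat, if_neg hp, div_mul_cancel₀ _ hp]
  have e1 : (∫ x : Fin (K + 1) → EuclideanSpace ℝ (Fin d),
      g (x (Fin.last K)) * zHat ν μ p q x * pPath ν p x) = ∫ y, g y * μ y := by
    rw [integral_congr_ae h1]
    exact hG.2
  refine ⟨e1, ?_⟩
  rw [e1, integral_congr_ae h2, hW.2]
  have : ∫ y, g y * (μ y / ∫ z, μ z) = (∫ y, g y * μ y) / ∫ z, μ z := by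
    simp_rw [← mul_div_assoc]
    exact integral_div _ _
  rw [this]
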